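/- For each integer k ≥ 1 and each integer n ≥ 1, the matrix M_k^n is irreducible: for every pair of indices i, j there exists an integer p ≥ 1 such that the (i, j) entry of (M_k^n)^p is strictly positive. -/

import Mathlib

/-- The transition matrix `Mₖ`. Rows/columns are indexed by `Fin (4k+4)` with the labeling
`0 = a`, `1 = b`, `2 = c`, `3 = d`, `4 + i = xᵢ` (`0 ≤ i ≤ 2k-1`), `2k+4+i = yᵢ`
(`0 ≤ i ≤ 2k-1`). Nonzero entries: column `a` has `1` in rows `a, x₀, y₀`; column `b` has `1`
in rows `b, x₀, y₀`; column `c` has `1` in row `d`; column `d` has `1` in rows `d, x₀, y₁`;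
column `xᵢ` (`0 ≤ i ≤ 2k-2`) has `1` in row `xᵢ₊₁`; column `x_{2k-1}` has `1` in rows
`a, b, y₀`; column `yᵢ` (`0 ≤ i ≤ 2k-2`) has `1` in row `yᵢ₊₁`; column `y_{2k-1}` has `1`
in rows `b, c`. -/
def Mk (k : ℕ) : Matrix (Fin (4 * k + 4)) (Fin (4 * k + 4)) ℕ :=
  fun i j =>
    if j.val = 0 then (if i.val = 0 ∨ i.val = 4 ∨ i.val = 2 * k + 4 then 1 else 0)
    else if j.val = 1 then (if i.val = 1 ∨ i.val = 4 ∨ i.val = 2 * k + 4 then 1 else 0)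
    else if j.val = 2 then (if i.val = 3 then 1 else 0)
    else if j.val = 3 then (if i.val = 3 ∨ i.val = 4 ∨ i.val = 2 * k + 5 then 1 else 0)
    else if j.val = 2 * k + 3 then (if i.val = 0 ∨ i.val = 1 ∨ i.val = 2 * k + 4 then 1 else 0)
    else if j.val = 4 * k + 3 then (if i.val = 1 ∨ i.val = 2 then 1 else 0)
    else (if i.val = j.val + 1 then 1 else 0)

section Aux

/-- Transitivity of positivity of powers of a nonnegative (ℕ-valued) matrix. -/
lemma entry_pos_trans {m : ℕ} (M : Matrix (Fin m) (Fin m) ℕ) {s t : ℕ} {i l j : Fin m}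
    (h1 : 0 < (M ^ s) i l) (h2 : 0 < (M ^ t) l j) : 0 < (M ^ (s + t)) i j := by
  rw [pow_add, Matrix.mul_apply]
  have hle : (M ^ s) i l * (M ^ t) l j ≤ ∑ x, (M ^ s) i x * (M ^ t) x j :=
    Finset.single_le_sum (f := fun x => (M ^ s) i x * (M ^ t) x j)
      (fun x _ => Nat.zero_le _) (Finset.mem_univ l)
  exact lt_of_lt_of_le (Nat.mul_pos h1 h2) hle

/-- The basic edges of the graph of `Mk k` (the ones we use). -/
lemma Mk_pos {k : ℕ} (hk : 1 ≤ k) {i j : Fin (4 * k + 4)}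
    (h : (j.val = 0 ∧ (i.val = 0 ∨ i.val = 4)) ∨
         (j.val = 1 ∧ i.val = 4) ∨
         (j.val = 2 ∧ i.val = 3) ∨
         (j.val = 3 ∧ i.val = 4) ∨
         (j.val = 2 * k + 3 ∧ i.val = 0) ∨
         (j.val = 4 * k + 3 ∧ (i.val = 1 ∨ i.val = 2))) :
    0 < Mk k i j := by
  simp only [Mk]
  split_ifs <;> omega

/-- The chain edge `j+1 → j` exists for all `4 ≤ j ≤ 4k+2`. -/
lemma Mk_chain {k : ℕ} (hk : 1 ≤ k) {i j : Fin (4 * k + 4)}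
    (h4 : 4 ≤ j.val) (hij : i.val = j.val + 1) (htop : j.val + 1 ≤ 4 * k + 3) :
    0 < Mk k i j := by
  simp only [Mk]
  split_ifs <;> omega

/-- Descending along the chain. -/
lemma Mk_descend {k : ℕ} (hk : 1 ≤ k) :
    ∀ d (i j : Fin (4 * k + 4)), 4 ≤ j.val → i.val = j.val + d →
      0 < (Mk k ^ d) i j := by
  intro d
  induction d with
  | zero =>
    intro i j _ hij
    have : i = j := Fin.ext (by (try simp) <;> omega)
    subst this
    simp [Matrix.one_apply]
  | succ d ih =>
    intro i j h4 hij
    have hlt : j.val + 1 < 4 * k + 4 := by (try simp) <;> omega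
    set l : Fin (4 * k + 4) := ⟨j.val + 1, hlt⟩ with hl
    have h1 : 0 < (Mk k ^ d) i l := ih i l (by show 4 ≤ j.val + 1; omega) (by simp only [hl, Fin.val_mk]; omega)
    have h2 : 0 < (Mk k ^ 1) l j := by
      rw [pow_one]
      exact Mk_chain hk (by (try simp) <;> omega) (by simp only [hl, Fin.val_mk]) (by (try simp) <;> omega)
    exact entry_pos_trans (Mk k) h1 h2

/-- Every vertex reaches `x₀ = 4`. -/
lemma reach4 {k : ℕ} (hk : 1 ≤ k) (i : Fin (4 * k + 4)) :
    ∃ t, 0 < (Mk k ^ t) i ⟨4, by (try simp) <;> omega⟩ := by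
  have hdesc : ∀ l : Fin (4 * k + 4), 4 ≤ l.val →
      0 < (Mk k ^ (l.val - 4)) l ⟨4, by (try simp) <;> omega⟩ := by
    intro l hl
    exact Mk_descend hk (l.val - 4) l _ (by (try simp) <;> omega) (by (try simp) <;> omega)
  have htop : (⟨4 * k + 3, by (try simp) <;> omega⟩ : Fin (4 * k + 4)).val = 4 * k + 3 := rfl
  rcases Nat.lt_or_ge i.val 4 with h4 | h4
  · -- i.val ∈ {0,1,2,3}
    have hcase : i.val = 0 ∨ i.val = 1 ∨ i.val = 2 ∨ i.val = 3 := by omega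
    have hc2 : ∀ i' : Fin (4 * k + 4), i'.val = 1 ∨ i'.val = 2 →
        0 < (Mk k ^ (1 + (4 * k + 3 - 4))) i' ⟨4, by (try simp) <;> omega⟩ := by
      intro i' hi'
      refine entry_pos_trans (Mk k) (l := ⟨4 * k + 3, by (try simp) <;> omega⟩) ?_
        (hdesc ⟨4 * k + 3, by (try simp) <;> omega⟩ (by (try simp) <;> omega))
      rw [pow_one]
      (apply Mk_pos hk); (try simp) <;> omega
    rcases hcase with h | h | h | h
    · -- a → x_{2k-1} → … → x₀
      refine ⟨1 + (2 * k + 3 - 4), entry_pos_trans (Mk k) (l := ⟨2 * k + 3, by (try simp) <;> omega⟩) ?_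
        (hdesc ⟨2 * k + 3, by (try simp) <;> omega⟩ (by (try simp) <;> omega))⟩
      rw [pow_one]
      exact Mk_pos hk (Or.inr (Or.inr (Or.inr (Or.inr (Or.inl ⟨rfl, h⟩)))))
    · exact ⟨_, hc2 i (Or.inl h)⟩
    · exact ⟨_, hc2 i (Or.inr h)⟩
    · -- d → c → …
      refine ⟨1 + (1 + (4 * k + 3 - 4)), entry_pos_trans (Mk k) (l := ⟨2, by (try simp) <;> omega⟩) ?_
        (hc2 ⟨2, by (try simp) <;> omega⟩ (by (try simp) <;> omega))⟩
      rw [pow_one]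
      (apply Mk_pos hk); (try simp) <;> omega
  · exact ⟨i.val - 4, hdesc i h4⟩

/-- Every vertex reaches `a = 0`. -/
lemma reach0 {k : ℕ} (hk : 1 ≤ k) (i : Fin (4 * k + 4)) :
    ∃ t, 0 < (Mk k ^ t) i ⟨0, by (try simp) <;> omega⟩ := by
  obtain ⟨t, ht⟩ := reach4 hk i
  refine ⟨t + 1, entry_pos_trans (Mk k) ht ?_⟩
  rw [pow_one]
  (apply Mk_pos hk); (try simp) <;> omega

/-- `a = 0` reaches every vertex. -/
lemma from0 {k : ℕ} (hk : 1 ≤ k) (j : Fin (4 * k + 4)) :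
    ∃ s, 0 < (Mk k ^ s) ⟨0, by (try simp) <;> omega⟩ j := by
  obtain ⟨t0, ht0⟩ := reach4 hk (⟨0, by (try simp) <;> omega⟩ : Fin (4 * k + 4))
  have hcase : j.val = 0 ∨ j.val = 1 ∨ j.val = 2 ∨ j.val = 3 ∨ 4 ≤ j.val := by omega
  rcases hcase with h | h | h | h | h
  · refine ⟨0, ?_⟩
    have : (⟨0, by (try simp) <;> omega⟩ : Fin (4 * k + 4)) = j := Fin.ext (by (try simp) <;> omega)
    rw [this]
    simp [Matrix.one_apply]
  · -- a → … → x₀ → b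
    refine ⟨t0 + 1, entry_pos_trans (Mk k) ht0 ?_⟩
    rw [pow_one]
    (apply Mk_pos hk); (try simp) <;> omega
  · -- a → … → x₀ → d → c
    refine ⟨t0 + (1 + 1), entry_pos_trans (Mk k) ht0
      (entry_pos_trans (Mk k) (l := ⟨3, by (try simp) <;> omega⟩) ?_ ?_)⟩
    · rw [pow_one]; (apply Mk_pos hk); (try simp) <;> omega
    · rw [pow_one]; (apply Mk_pos hk); (try simp) <;> omega
  · -- a → … → x₀ → d
    refine ⟨t0 + 1, entry_pos_trans (Mk k) ht0 ?_⟩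
    rw [pow_one]
    (apply Mk_pos hk); (try simp) <;> omega
  · -- a → … → x₀ → b → y_{2k-1} → … → j
    refine ⟨t0 + (1 + (1 + (4 * k + 3 - j.val))),
      entry_pos_trans (Mk k) ht0 (entry_pos_trans (Mk k) (l := ⟨1, by (try simp) <;> omega⟩) ?_
        (entry_pos_trans (Mk k) (l := ⟨4 * k + 3, by (try simp) <;> omega⟩) ?_ ?_))⟩
    · rw [pow_one]; (apply Mk_pos hk); (try simp) <;> omega
    · rw [pow_one]; (apply Mk_pos hk); (try simp) <;> omega
    · exact Mk_descend hk _ _ _ (by (try simp) <;> omega) (by (try simp) <;> omega)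

/-- The self-loop at `a` gives positivity of every power on the diagonal at `a`. -/
lemma loop0 {k : ℕ} (hk : 1 ≤ k) (m : ℕ) :
    0 < (Mk k ^ m) ⟨0, by (try simp) <;> omega⟩ ⟨0, by (try simp) <;> omega⟩ := by
  induction m with
  | zero => simp [Matrix.one_apply]
  | succ m ih =>
    refine entry_pos_trans (Mk k) ih ?_
    rw [pow_one]
    (apply Mk_pos hk); (try simp) <;> omega

end Aux

theorem Mk_pow_irreducible (k : ℕ) (hk : 1 ≤ k) (n : ℕ) (hn : 1 ≤ n) :
    ∀ i j : Fin (4 * k + 4), ∃ p : ℕ, 1 ≤ p ∧ 0 < ((Mk k ^ n) ^ p) i j := by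
  intro i j
  obtain ⟨t, ht⟩ := reach0 hk i
  obtain ⟨s, hs⟩ := from0 hk j
  refine ⟨t + s + 1, by (try simp) <;> omega, ?_⟩
  rw [← pow_mul]
  have h1 : t + s + 1 ≤ n * (t + s + 1) := Nat.le_mul_of_pos_left _ (by (try simp) <;> omega)
  have heq : n * (t + s + 1) = t + ((n * (t + s + 1) - t - s) + s) := by (try simp) <;> omega
  rw [heq]
  exact entry_pos_trans (Mk k) ht
    (entry_pos_trans (Mk k) (loop0 hk (n * (t + s + 1) - t - s)) hs)
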